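/- Let C and C' be two (n,2) codes for which {0,1}^n admits partitions {Y_1,...,Y_5} and {Y_1', ..., Y_5'} with bijections g_i : Y_i → Y_i' such that d_C(y) = d_{C'}(g_i(y)) for y ∈ Y_1, Y_2, Y_4; d_C(y) = d_{C'}(g_3(y)) + 1 for y ∈ Y_3; and d_C(y) + 1 = d_{C'}(g_5(y)) for y ∈ Y_5. Define α_d^i(C) = |{y ∈ Y_i : d_C(y) = d}|. Then λ_{C'} ≥ λ_C (for crossover probability ε ∈ (0,1/2)) if and only if Σ_{d=1}^n [α_d^3(C) − α_{d−1}^5(C)] (ε/(1−ε))^{d−1} ≥ 0. -/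

import Mathlib

open Finset

/-- Minimum Hamming distance from `y` to the 4 rows (codewords) of `C`. -/
def dmin {m : ℕ} (C : Fin 4 → Fin m → ZMod 2) (y : Fin m → ZMod 2) : ℕ :=
  Finset.univ.inf' ⟨0, Finset.mem_univ 0⟩ (fun i => hammingDist (C i) y)

/-- Number of outputs at min-distance `d` from the code `C`. -/
def alpha {m : ℕ} (C : Fin 4 → Fin m → ZMod 2) (d : ℕ) : ℕ :=
  (Finset.univ.filter (fun y : Fin m → ZMod 2 => dmin C y = d)).card

/-- Average ML correct decoding probability of `C` on a BSC with crossover `ε`. -/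
noncomputable def lam {m : ℕ} (C : Fin 4 → Fin m → ZMod 2) (ε : ℝ) : ℝ :=
  (1/4) * ∑ d ∈ Finset.range (m+1), (alpha C d : ℝ) * (1-ε)^(m-d) * ε^d

/-- The column pattern (in `{0,1}^4`) associated with the integer `i`,
row 1 being the most significant bit. -/
def pat (i : ℕ) : Fin 4 → ZMod 2 := fun j => if Nat.testBit i (3 - (j : ℕ)) then 1 else 0

/-- Number of columns of `C` equal to the pattern `p`. -/
def colCount {m : ℕ} (C : Fin 4 → Fin m → ZMod 2) (p : Fin 4 → ZMod 2) : ℕ :=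
  (Finset.univ.filter (fun k : Fin m => (fun i => C i k) = p)).card

/-- A code is linear if its set of codewords is a subgroup of `({0,1}^n, ⊕)`. -/
def IsLinearCode {m : ℕ} (C : Fin 4 → Fin m → ZMod 2) : Prop :=
  ∃ H : AddSubgroup (Fin m → ZMod 2), Set.range C = (H : Set (Fin m → ZMod 2))

/-- `w_i(y)`: number of positions with column pattern `i` where `y` is 1. -/
def wcount {m : ℕ} (C : Fin 4 → Fin m → ZMod 2) (i : ℕ) (y : Fin m → ZMod 2) : ℕ :=
  (Finset.univ.filter (fun k : Fin m => (fun r => C r k) = pat i ∧ y k = 1)).card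

/-- Auxiliary summation-by-parts identity for the `Y₃` part. -/
lemma aux_shift1 (n : ℕ) (f w : ℕ → ℝ) (hf0 : f 0 = 0) (hftop : f (n+1) = 0) :
    ∑ d ∈ Finset.range (n+1), (f (d+1) - f d) * w d
      = ∑ d ∈ Finset.range n, f (d+1) * (w d - w (d+1)) := by
  have e1 : ∑ d ∈ Finset.range (n+1), f (d+1) * w d
      = ∑ d ∈ Finset.range n, f (d+1) * w d := by
    rw [Finset.sum_range_succ, hftop, zero_mul, add_zero]
  have e2 : ∑ d ∈ Finset.range (n+1), f d * w d
      = ∑ d ∈ Finset.range n, f (d+1) * w (d+1) := by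
    rw [Finset.sum_range_succ' (fun d => f d * w d), hf0, zero_mul, add_zero]
  calc ∑ d ∈ Finset.range (n+1), (f (d+1) - f d) * w d
      = ∑ d ∈ Finset.range (n+1), (f (d+1) * w d - f d * w d) := by
        apply Finset.sum_congr rfl; intro d _; ring
    _ = (∑ d ∈ Finset.range (n+1), f (d+1) * w d)
        - ∑ d ∈ Finset.range (n+1), f d * w d := Finset.sum_sub_distrib _ _
    _ = (∑ d ∈ Finset.range n, f (d+1) * w d)
        - ∑ d ∈ Finset.range n, f (d+1) * w (d+1) := by rw [e1, e2]
    _ = _ := by rw [← Finset.sum_sub_distrib]; apply Finset.sum_congr rfl; intro d _; ring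

/-- Auxiliary summation-by-parts identity for the `Y₅` part. -/
lemma aux_shift2 (n : ℕ) (h w b : ℕ → ℝ) (hn : h n = 0) (hb0 : b 0 = 0)
    (hb : ∀ d, b (d+1) = h d) :
    ∑ d ∈ Finset.range (n+1), (b d - h d) * w d
      = -∑ d ∈ Finset.range n, h d * (w d - w (d+1)) := by
  have e1 : ∑ d ∈ Finset.range (n+1), b d * w d
      = ∑ d ∈ Finset.range n, h d * w (d+1) := by
    rw [Finset.sum_range_succ' (fun d => b d * w d), hb0, zero_mul, add_zero]
    simp only [hb]
  have e2 : ∑ d ∈ Finset.range (n+1), h d * w d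
      = ∑ d ∈ Finset.range n, h d * w d := by
    rw [Finset.sum_range_succ, hn, zero_mul, add_zero]
  calc ∑ d ∈ Finset.range (n+1), (b d - h d) * w d
      = ∑ d ∈ Finset.range (n+1), (b d * w d - h d * w d) := by
        apply Finset.sum_congr rfl; intro d _; ring
    _ = (∑ d ∈ Finset.range (n+1), b d * w d)
        - ∑ d ∈ Finset.range (n+1), h d * w d := Finset.sum_sub_distrib _ _
    _ = (∑ d ∈ Finset.range n, h d * w (d+1)) - ∑ d ∈ Finset.range n, h d * w d := by
        rw [e1, e2]
    _ = _ := by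
        rw [← Finset.sum_sub_distrib, ← Finset.sum_neg_distrib]
        apply Finset.sum_congr rfl; intro d _; ring

/-- Theorem 3 of the paper: given the partitions `{Y_i}` and `{Y_i'}` of `{0,1}^n`
with bijections `g_i` matching distances (equal on `Y₁, Y₂, Y₄`, shifted down by 1
on `Y₃`, shifted up by 1 on `Y₅`), `λ_{C'} ≥ λ_C` iff the weighted sum
`Σ_d [α_d^3 − α_{d−1}^5](ε/(1−ε))^{d−1}` is nonnegative. -/
theorem stmt14 (n : ℕ) (C C' : Fin 4 → Fin n → ZMod 2)
    (Y Y' : Fin 5 → Finset (Fin n → ZMod 2))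
    (hY : ∀ y : Fin n → ZMod 2, ∃! i : Fin 5, y ∈ Y i)
    (hY' : ∀ y : Fin n → ZMod 2, ∃! i : Fin 5, y ∈ Y' i)
    (g : Fin 5 → (Fin n → ZMod 2) → (Fin n → ZMod 2))
    (hg : ∀ i, Set.BijOn (g i) (Y i : Set (Fin n → ZMod 2)) (Y' i : Set (Fin n → ZMod 2)))
    (h1 : ∀ y ∈ Y 0, dmin C y = dmin C' (g 0 y))
    (h2 : ∀ y ∈ Y 1, dmin C y = dmin C' (g 1 y))
    (h4 : ∀ y ∈ Y 3, dmin C y = dmin C' (g 3 y))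
    (h3 : ∀ y ∈ Y 2, dmin C y = dmin C' (g 2 y) + 1)
    (h5 : ∀ y ∈ Y 4, dmin C y + 1 = dmin C' (g 4 y))
    (ε : ℝ) (hε1 : 0 < ε) (hε2 : ε < 1/2) :
    lam C ε ≤ lam C' ε ↔
      0 ≤ ∑ d ∈ Finset.Icc 1 n,
        ((((Y 2).filter (fun y => dmin C y = d)).card : ℝ) -
          (((Y 4).filter (fun y => dmin C y = d - 1)).card : ℝ)) * (ε/(1-ε))^(d-1) := by
  have h1e : (0:ℝ) < 1 - ε := by linarith
  have hne : (1:ℝ) - ε ≠ 0 := ne_of_gt h1e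
  have h2e : (0:ℝ) < 1 - 2*ε := by linarith
  -- dmin bounds
  have hdle : ∀ (D : Fin 4 → Fin n → ZMod 2) (y : Fin n → ZMod 2), dmin D y ≤ n := by
    intro D y
    calc dmin D y ≤ hammingDist (D 0) y :=
          Finset.inf'_le (fun i => hammingDist (D i) y) (Finset.mem_univ 0)
      _ ≤ Fintype.card (Fin n) := hammingDist_le_card_fintype
      _ = n := Fintype.card_fin n
  -- partition counting
  have hpartgen : ∀ (Z : Fin 5 → Finset (Fin n → ZMod 2)),
      (∀ y, ∃! i, y ∈ Z i) → ∀ (P : (Fin n → ZMod 2) → Prop) [DecidablePred P],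
      (Finset.univ.filter P).card = ∑ i : Fin 5, ((Z i).filter P).card := by
    intro Z hZ P instP
    have key : ∀ i, ((Z i).filter P).card
        = ∑ y ∈ Finset.univ.filter P, (if y ∈ Z i then 1 else 0) := by
      intro i
      rw [← Finset.card_filter]
      congr 1
      ext y
      simp only [Finset.mem_filter, Finset.mem_univ, true_and]
      tauto
    calc (Finset.univ.filter P).card = ∑ y ∈ Finset.univ.filter P, 1 := by simp
      _ = ∑ y ∈ Finset.univ.filter P, ∑ i : Fin 5, (if y ∈ Z i then 1 else 0) := by
          apply Finset.sum_congr rfl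
          intro y _
          obtain ⟨j, hj, hu⟩ := hZ y
          rw [Finset.sum_eq_single j]
          · simp [hj]
          · intro i _ hij
            simp only [ite_eq_right_iff]
            intro hiZ
            exact absurd (hu i hiZ) hij
          · intro h; exact absurd (Finset.mem_univ j) h
      _ = ∑ i : Fin 5, ∑ y ∈ Finset.univ.filter P, (if y ∈ Z i then 1 else 0) :=
          Finset.sum_comm
      _ = ∑ i : Fin 5, ((Z i).filter P).card := by
          exact Finset.sum_congr rfl (fun i _ => (key i).symm)
  -- transfer counts along the bijections
  have hbij : ∀ (i : Fin 5) (d : ℕ),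
      ((Y' i).filter (fun y => dmin C' y = d)).card
        = ((Y i).filter (fun y => dmin C' (g i y) = d)).card := by
    intro i d
    symm
    apply Finset.card_bij (fun y _ => g i y)
    · intro y hy
      rw [Finset.mem_filter] at hy ⊢
      exact ⟨(hg i).mapsTo hy.1, hy.2⟩
    · intro y1 hy1 y2 hy2 h
      exact (hg i).injOn (Finset.mem_filter.mp hy1).1 (Finset.mem_filter.mp hy2).1 h
    · intro y' hy'
      obtain ⟨hy'1, hy'2⟩ := Finset.mem_filter.mp hy'
      obtain ⟨y, hy, hgy⟩ := (hg i).surjOn hy'1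
      exact ⟨y, Finset.mem_filter.mpr ⟨hy, by rw [hgy]; exact hy'2⟩, hgy⟩
  -- rewrite each filtered set in terms of dmin C
  have e0 : ∀ d, ((Y 0).filter (fun y => dmin C' (g 0 y) = d))
      = (Y 0).filter (fun y => dmin C y = d) := by
    intro d; apply Finset.filter_congr; intro y hy; rw [h1 y hy]
  have e1 : ∀ d, ((Y 1).filter (fun y => dmin C' (g 1 y) = d))
      = (Y 1).filter (fun y => dmin C y = d) := by
    intro d; apply Finset.filter_congr; intro y hy; rw [h2 y hy]
  have e3 : ∀ d, ((Y 3).filter (fun y => dmin C' (g 3 y) = d))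
      = (Y 3).filter (fun y => dmin C y = d) := by
    intro d; apply Finset.filter_congr; intro y hy; rw [h4 y hy]
  have e2 : ∀ d, ((Y 2).filter (fun y => dmin C' (g 2 y) = d))
      = (Y 2).filter (fun y => dmin C y = d + 1) := by
    intro d; apply Finset.filter_congr; intro y hy
    have h' := h3 y hy
    constructor <;> intro h <;> omega
  have e4 : ∀ d, ((Y 4).filter (fun y => dmin C' (g 4 y) = d))
      = (Y 4).filter (fun y => dmin C y + 1 = d) := by
    intro d; apply Finset.filter_congr; intro y hy
    have h' := h5 y hy
    constructor <;> intro h <;> omega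
  -- the key per-degree identity
  have key : ∀ d : ℕ, (alpha C' d : ℝ) - (alpha C d : ℝ)
      = ((((Y 2).filter (fun y => dmin C y = d+1)).card : ℝ)
          - (((Y 2).filter (fun y => dmin C y = d)).card : ℝ))
        + ((((Y 4).filter (fun y => dmin C y + 1 = d)).card : ℝ)
          - (((Y 4).filter (fun y => dmin C y = d)).card : ℝ)) := by
    intro d
    have hC : alpha C d = ∑ i : Fin 5, ((Y i).filter (fun y => dmin C y = d)).card :=
      hpartgen Y hY _
    have hC' : alpha C' d = ∑ i : Fin 5, ((Y' i).filter (fun y => dmin C' y = d)).card :=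
      hpartgen Y' hY' _
    rw [hC, hC']
    simp only [hbij]
    rw [Fin.sum_univ_five, Fin.sum_univ_five, e0 d, e1 d, e2 d, e3 d, e4 d]
    push_cast
    ring
  -- zero-count facts
  have ha2_0 : ((Y 2).filter (fun y => dmin C y = 0)).card = 0 := by
    rw [Finset.card_eq_zero, Finset.filter_eq_empty_iff]
    intro y hy
    have h' := h3 y hy; omega
  have ha2_top : ((Y 2).filter (fun y => dmin C y = n+1)).card = 0 := by
    rw [Finset.card_eq_zero, Finset.filter_eq_empty_iff]
    intro y _
    have h' := hdle C y; omega
  have ha4_n : ((Y 4).filter (fun y => dmin C y = n)).card = 0 := by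
    rw [Finset.card_eq_zero, Finset.filter_eq_empty_iff]
    intro y hy
    have h' := h5 y hy
    have h'' := hdle C' (g 4 y); omega
  have ha4'_0 : ((Y 4).filter (fun y => dmin C y + 1 = 0)).card = 0 := by
    rw [Finset.card_eq_zero, Finset.filter_eq_empty_iff]
    intro y _; omega
  have ha4' : ∀ d : ℕ, ((Y 4).filter (fun y => dmin C y + 1 = d + 1)).card
      = ((Y 4).filter (fun y => dmin C y = d)).card := by
    intro d
    congr 1
    apply Finset.filter_congr
    intro y _
    omega
  -- abbreviations (as plain functions)
  set a2 : ℕ → ℝ := fun d => (((Y 2).filter (fun y => dmin C y = d)).card : ℝ) with ha2def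
  set a4 : ℕ → ℝ := fun d => (((Y 4).filter (fun y => dmin C y = d)).card : ℝ) with ha4def
  set b4 : ℕ → ℝ := fun d => (((Y 4).filter (fun y => dmin C y + 1 = d)).card : ℝ) with hb4def
  set w : ℕ → ℝ := fun d => (1-ε)^(n-d) * ε^d with hwdef
  -- main difference formula
  have hw : ∀ d ∈ Finset.range n, w d - w (d+1)
      = ((1-2*ε) * (1-ε)^(n-1)) * (ε/(1-ε))^d := by
    intro d hd
    rw [Finset.mem_range] at hd
    have k1 : n - d = (n-1-d) + 1 := by omega
    have k2 : n - (d+1) = n-1-d := by omega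
    have k3 : n - 1 = (n-1-d) + d := by omega
    simp only [hwdef]
    rw [k1, k2, k3, pow_add, pow_succ, div_pow]
    have hp : ((1:ℝ)-ε)^d ≠ 0 := pow_ne_zero _ hne
    field_simp
    simp only [Nat.add_sub_cancel]
    ring
  have hdiff : lam C' ε - lam C ε
      = ((1/4) * ((1-2*ε) * (1-ε)^(n-1)))
        * ∑ d ∈ Finset.range n, (a2 (d+1) - a4 d) * (ε/(1-ε))^d := by
    have step1 : lam C' ε - lam C ε
        = (1/4) * ∑ d ∈ Finset.range (n+1),
            (((alpha C' d : ℝ) - (alpha C d : ℝ)) * w d) := by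
      unfold lam
      rw [← mul_sub, ← Finset.sum_sub_distrib]
      congr 1
      apply Finset.sum_congr rfl
      intro d _
      simp only [hwdef]
      ring
    rw [step1]
    have step2 : ∑ d ∈ Finset.range (n+1), (((alpha C' d : ℝ) - (alpha C d : ℝ)) * w d)
        = (∑ d ∈ Finset.range (n+1), (a2 (d+1) - a2 d) * w d)
          + ∑ d ∈ Finset.range (n+1), (b4 d - a4 d) * w d := by
      rw [← Finset.sum_add_distrib]
      apply Finset.sum_congr rfl
      intro d _
      rw [key d]
      simp only [ha2def, ha4def, hb4def]
      ring
    rw [step2]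
    have s2 : ∑ d ∈ Finset.range (n+1), (a2 (d+1) - a2 d) * w d
        = ∑ d ∈ Finset.range n, a2 (d+1) * (w d - w (d+1)) := by
      apply aux_shift1
      · simp only [ha2def]; rw [ha2_0]; norm_num
      · simp only [ha2def]; rw [ha2_top]; norm_num
    have s4 : ∑ d ∈ Finset.range (n+1), (b4 d - a4 d) * w d
        = -∑ d ∈ Finset.range n, a4 d * (w d - w (d+1)) := by
      apply aux_shift2
      · simp only [ha4def]; rw [ha4_n]; norm_num
      · simp only [hb4def]; rw [ha4'_0]; norm_num
      · intro d; simp only [ha4def, hb4def]; rw [ha4' d]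
    rw [s2, s4, ← sub_eq_add_neg, ← Finset.sum_sub_distrib, Finset.mul_sum, Finset.mul_sum]
    apply Finset.sum_congr rfl
    intro d hd
    rw [hw d hd]
    ring
  -- rewrite the RHS sum over Icc as a sum over range
  have hT : (∑ d ∈ Finset.Icc 1 n,
        ((((Y 2).filter (fun y => dmin C y = d)).card : ℝ) -
          (((Y 4).filter (fun y => dmin C y = d - 1)).card : ℝ)) * (ε/(1-ε))^(d-1))
      = ∑ d ∈ Finset.range n, (a2 (d+1) - a4 d) * (ε/(1-ε))^d := by
    rw [← Finset.Ico_add_one_right_eq_Icc, Finset.sum_Ico_eq_sum_range]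
    apply Finset.sum_congr rfl
    intro d _
    have k1 : 1 + d = d + 1 := by omega
    have k2 : d + 1 - 1 = d := by omega
    rw [k1, k2]
  have hc : (0:ℝ) < (1/4) * ((1-2*ε) * (1-ε)^(n-1)) := by positivity
  rw [← sub_nonneg, hdiff, hT]
  exact mul_nonneg_iff_of_pos_left hc
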